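/- Let d ≥ 1 and δ ≥ 1, and set θ_1 = 2π/d. Then (2δ - 1) - sin(θ_1(δ - 1/2))/sin(θ_1/2) ≤ (1/6)(π/d)^2 (2δ - 1)^3, assuming sin(π/d) > 0. -/

import Mathlib

open Real

lemma aux_sub_cube_le_sin (x : ℝ) (hx : 0 ≤ x) : x - x ^ 3 / 6 ≤ Real.sin x := by
  have hmono : MonotoneOn (fun t : ℝ => Real.sin t - t + t ^ 3 / 6) (Set.Ici 0) := by
    have hderiv : ∀ t : ℝ, HasDerivAt (fun t : ℝ => Real.sin t - t + t ^ 3 / 6)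
        (Real.cos t - 1 + 3 * t ^ 2 / 6) t := by
      intro t
      have h1 := ((Real.hasDerivAt_sin t).sub (hasDerivAt_id t)).add
        ((hasDerivAt_pow 3 t).div_const 6)
      exact h1.congr_deriv (by ring)
    apply monotoneOn_of_deriv_nonneg (convex_Ici 0)
    · exact Continuous.continuousOn (by continuity)
    · intro t ht
      exact ((hderiv t).differentiableAt).differentiableWithinAt
    · intro t ht
      rw [(hderiv t).deriv]
      have := Real.one_sub_sq_div_two_le_cos (x := t)
      nlinarith [this]
  have h0 : (fun t : ℝ => Real.sin t - t + t ^ 3 / 6) 0 ≤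
      (fun t : ℝ => Real.sin t - t + t ^ 3 / 6) x :=
    hmono (Set.mem_Ici.mpr le_rfl) (Set.mem_Ici.mpr hx) hx
  simp only [Real.sin_zero] at h0
  nlinarith [h0]

lemma aux_key (a m : ℝ) (ha : 0 < a) (ha2 : a ≤ π / 2) (hm : 1 ≤ m)
    (hs : 0 < Real.sin a) :
    m - Real.sin (m * a) / Real.sin a ≤ (1/6) * a ^ 2 * m ^ 3 := by
  have hsa : Real.sin a ≤ a := Real.sin_le ha.le
  have key : (m - (1/6) * a ^ 2 * m ^ 3) * Real.sin a ≤ Real.sin (m * a) := by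
    rcases le_or_gt 0 (Real.sin (m * a)) with hpos | hneg
    · rcases le_or_gt 0 (m - (1/6) * a ^ 2 * m ^ 3) with h1 | h1
      · have h2 : (m - (1/6) * a ^ 2 * m ^ 3) * Real.sin a
            ≤ (m - (1/6) * a ^ 2 * m ^ 3) * a :=
          mul_le_mul_of_nonneg_left hsa h1
        have h3 : m * a - (m * a) ^ 3 / 6 ≤ Real.sin (m * a) :=
          aux_sub_cube_le_sin (m * a) (by positivity)
        have h4 : (m - (1/6) * a ^ 2 * m ^ 3) * a = m * a - (m * a) ^ 3 / 6 := by ring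
        linarith
      · nlinarith [hs]
    · -- sin (m*a) < 0 forces m*a > π
      have hma : π < m * a := by
        by_contra h
        push_neg at h
        exact absurd (Real.sin_nonneg_of_nonneg_of_le_pi (by positivity) h) (not_le.mpr hneg)
      have hjordan : 2 / π * a ≤ Real.sin a := Real.mul_le_sin ha.le ha2
      have hsinm : -1 ≤ Real.sin (m * a) := Real.neg_one_le_sin _
      have hpi : 3 < π := Real.pi_gt_three
      have hm0 : (0:ℝ) < m := by linarith
      have hm2 : π ^ 2 < (m * a) ^ 2 := by nlinarith
      -- R - m ≥ m * (π² - 6) / 6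
      have hRgt : m * (π ^ 2 - 6) / 6 ≤ (1/6) * a ^ 2 * m ^ 3 - m := by
        have h5 : m * π ^ 2 ≤ m * (m * a) ^ 2 := by nlinarith
        nlinarith
      have hpi2 : (9:ℝ) < π ^ 2 := by nlinarith
      have hc1 : (0:ℝ) ≤ m * (π ^ 2 - 6) / 6 := by
        have := mul_pos hm0 (show (0:ℝ) < π ^ 2 - 6 by linarith)
        linarith
      have hc2 : (0:ℝ) ≤ 2 / π * a := by positivity
      have hprod : (m * (π ^ 2 - 6) / 6) * (2 / π * a)
          ≤ ((1/6) * a ^ 2 * m ^ 3 - m) * Real.sin a :=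
        mul_le_mul hRgt hjordan hc2 (le_trans hc1 hRgt)
      have hlow : (π ^ 2 - 6) / 3 ≤ (m * (π ^ 2 - 6) / 6) * (2 / π * a) := by
        have : (m * (π ^ 2 - 6) / 6) * (2 / π * a) = (m * a) * ((π ^ 2 - 6) / (3 * π)) := by
          field_simp; ring
        rw [this]
        have h6 : (0:ℝ) < (π ^ 2 - 6) / (3 * π) := div_pos (by nlinarith) (by positivity)
        have h7 : π * ((π ^ 2 - 6) / (3 * π)) ≤ (m * a) * ((π ^ 2 - 6) / (3 * π)) :=
          mul_le_mul_of_nonneg_right hma.le h6.le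
        have h8 : π * ((π ^ 2 - 6) / (3 * π)) = (π ^ 2 - 6) / 3 := by
          field_simp
        linarith
      have h9 : (1:ℝ) ≤ (π ^ 2 - 6) / 3 := by nlinarith
      nlinarith
  have h2 : m - (1/6) * a ^ 2 * m ^ 3 ≤ Real.sin (m * a) / Real.sin a := by
    rw [le_div_iff₀ hs]; exact key
  linarith

theorem stmt_7 (d δ : ℕ) (hd : 1 ≤ d) (hδ : 1 ≤ δ) (hsin : 0 < Real.sin (π / d)) :
    (2 * (δ:ℝ) - 1) -
        Real.sin ((2 * π / d) * ((δ:ℝ) - 1/2)) / Real.sin ((2 * π / d) / 2) ≤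
      (1/6) * (π / d)^2 * (2 * (δ:ℝ) - 1)^3 := by
  have hd0 : (0:ℝ) < d := by exact_mod_cast hd
  have ha : 0 < π / d := div_pos Real.pi_pos hd0
  have hm : 1 ≤ 2 * (δ:ℝ) - 1 := by
    have : (1:ℝ) ≤ (δ:ℝ) := by exact_mod_cast hδ
    linarith
  have hd2 : 2 ≤ d := by
    by_contra h
    interval_cases d
    simp [Real.sin_pi] at hsin
  have ha2 : π / d ≤ π / 2 := by
    apply div_le_div_of_nonneg_left Real.pi_pos.le two_pos
    exact_mod_cast hd2
  have hrw1 : (2 * π / d) * ((δ:ℝ) - 1/2) = (2 * (δ:ℝ) - 1) * (π / d) := by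
    field_simp
  have hrw2 : (2 * π / d) / 2 = π / d := by ring
  rw [hrw1, hrw2]
  exact aux_key (π / d) (2 * (δ:ℝ) - 1) ha ha2 hm hsin
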